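/- Let f : 𝕊 → X be a continuous surjection from the Sorgenfrey line onto a topological space X, and let x ∈ X be such that the fiber f⁻¹(x) is a nonempty closed discrete subset of the Sorgenfrey line. Then there exist rationals a < b and a point y ∈ [a, b) with f(y) = x such that y is the unique point of [a, b) mapped by f to x (i.e., [a, b) ∩ f⁻¹(x) = {y}). -/
import Mathlib


open Set Filter Topology Function

/-- The Sorgenfrey line: the real line as a type synonym. -/
def SorgenfreyLine : Type := ℝ

notation "𝕊" => SorgenfreyLine

noncomputable instance : LinearOrder 𝕊 := inferInstanceAs (LinearOrder ℝ)
instance : RatCast 𝕊 := inferInstanceAs (RatCast ℝ)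

/-- The topology on the Sorgenfrey line, generated by half-open intervals `[a, b)`, `a < b`. -/
instance : TopologicalSpace 𝕊 :=
  TopologicalSpace.generateFrom {s : Set 𝕊 | ∃ a b : 𝕊, a < b ∧ s = Set.Ico a b}

namespace Sorgenfrey10

/-- Coercion from the reals. -/
def σ : ℝ → 𝕊 := id
/-- Coercion to the reals. -/
def ρ : 𝕊 → ℝ := id

lemma lt_iff {a b : ℝ} : σ a < σ b ↔ a < b := Iff.rfl
lemma lt_iff' {a b : 𝕊} : a < b ↔ ρ a < ρ b := Iff.rfl
lemma le_iff' {a b : 𝕊} : a ≤ b ↔ ρ a ≤ ρ b := Iff.rfl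
lemma sr {a : 𝕊} : σ (ρ a) = a := rfl
lemma cast_eq (q : ℚ) : (q : 𝕊) = σ (q : ℝ) := rfl

lemma isOpen_iff {s : Set 𝕊} :
    IsOpen s ↔ ∀ x ∈ s, ∃ b, x < b ∧ Set.Ico x b ⊆ s := by
  constructor
  · intro h
    induction h with
    | basic u hu =>
      rintro x hx
      obtain ⟨a, b, hab, rfl⟩ := hu
      exact ⟨b, hx.2, fun z hz => ⟨hx.1.trans hz.1, hz.2⟩⟩
    | univ =>
      exact fun x _ => ⟨σ (ρ x + 1), lt_add_one (ρ x), fun _ _ => trivial⟩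
    | inter u v _ _ ihu ihv =>
      rintro x ⟨hxu, hxv⟩
      obtain ⟨b1, hb1, hsub1⟩ := ihu x hxu
      obtain ⟨b2, hb2, hsub2⟩ := ihv x hxv
      exact ⟨min b1 b2, lt_min hb1 hb2, fun z hz =>
        ⟨hsub1 ⟨hz.1, hz.2.trans_le (min_le_left _ _)⟩,
         hsub2 ⟨hz.1, hz.2.trans_le (min_le_right _ _)⟩⟩⟩
    | sUnion S _ ih =>
      rintro x ⟨t, htS, hxt⟩
      obtain ⟨b, hb, hsub⟩ := ih t htS x hxt
      exact ⟨b, hb, fun z hz => ⟨t, htS, hsub hz⟩⟩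
  · intro h
    choose b hb hsub using h
    have hs : s = ⋃ x, ⋃ hx : x ∈ s, Set.Ico x (b x hx) := by
      ext z
      constructor
      · intro hz
        exact mem_iUnion₂.2 ⟨z, hz, le_refl z, hb z hz⟩
      · intro hz
        obtain ⟨x, hx, hz'⟩ := mem_iUnion₂.1 hz
        exact hsub x hx hz'
    rw [hs]
    exact isOpen_iUnion fun x => isOpen_iUnion fun hx =>
      TopologicalSpace.GenerateOpen.basic _ ⟨x, b x hx, hb x hx, rfl⟩

/-- Right isolation in a discrete subset. -/
lemma right_isolated {S : Set 𝕊} (hd : DiscreteTopology S) {y : 𝕊} (hy : y ∈ S) :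
    ∃ b, y < b ∧ Set.Ico y b ∩ S ⊆ {y} := by
  have h1 : IsOpen ({⟨y, hy⟩} : Set S) := isOpen_discrete _
  rw [isOpen_induced_iff] at h1
  obtain ⟨U, hU, hUeq⟩ := h1
  have hyU : y ∈ U := by
    have : (⟨y, hy⟩ : S) ∈ (Subtype.val ⁻¹' U : Set S) := by rw [hUeq]; exact rfl
    exact this
  obtain ⟨b, hb, hsub⟩ := isOpen_iff.1 hU y hyU
  refine ⟨b, hb, fun z hz => ?_⟩
  have : (⟨z, hz.2⟩ : S) ∈ (Subtype.val ⁻¹' U : Set S) := hsub hz.1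
  rw [hUeq] at this
  exact congrArg Subtype.val this

/-- A nonempty closed discrete subset of the Sorgenfrey line has a point that is
isolated from the left in the Euclidean sense. -/
lemma exists_left_isolated {S : Set 𝕊} (hS : IsClosed S) (hd : DiscreteTopology S)
    (hne : S.Nonempty) :
    ∃ y ∈ S, ∃ c : ℝ, c < ρ y ∧ ∀ z ∈ S, ¬(c < ρ z ∧ ρ z < ρ y) := by
  by_contra hcon
  push_neg at hcon
  -- hcon : ∀ y ∈ S, ∀ c, c < ρ y → ∃ z ∈ S, c < ρ z ∧ ρ z < ρ y
  choose! g hg1 hg2 hg3 using hcon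
  obtain ⟨y0, hy0⟩ := hne
  let U : ℕ → {y : 𝕊 // y ∈ S} := fun n =>
    n.rec ⟨y0, hy0⟩ (fun n p =>
      ⟨g p.1 p.2 (ρ p.1 - (2 : ℝ) ^ (-(n : ℤ)))
          (by have : (0:ℝ) < (2:ℝ) ^ (-(n:ℤ)) := by positivity
              linarith),
        hg1 p.1 p.2 (ρ p.1 - (2 : ℝ) ^ (-(n : ℤ))) _⟩)
  set u : ℕ → ℝ := fun n => ρ (U n).1 with hu
  have hmem : ∀ n, σ (u n) ∈ S := fun n => (U n).2
  have hside : ∀ n : ℕ, ρ (U n).1 - (2 : ℝ) ^ (-(n:ℤ)) < ρ (U n).1 := by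
    intro n
    have : (0:ℝ) < (2:ℝ) ^ (-(n:ℤ)) := by positivity
    linarith
  have hUsucc : ∀ n : ℕ, (U (n+1)).1 =
      g (U n).1 (U n).2 (ρ (U n).1 - (2 : ℝ) ^ (-(n : ℤ))) (hside n) := fun n => rfl
  have hlt : ∀ n, u (n+1) < u n := by
    intro n
    have := hg3 (U n).1 (U n).2 (ρ (U n).1 - (2 : ℝ) ^ (-(n : ℤ))) (hside n)
    rw [← hUsucc n] at this
    exact this
  have hgt : ∀ n : ℕ, u n - (2 : ℝ) ^ (-(n:ℤ)) < u (n+1) := by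
    intro n
    have := hg2 (U n).1 (U n).2 (ρ (U n).1 - (2 : ℝ) ^ (-(n : ℤ))) (hside n)
    rw [← hUsucc n] at this
    exact this
  have hanti : StrictAnti u := strictAnti_nat_of_succ_lt hlt
  have hbdd : ∀ n : ℕ, u 0 - 2 + 2 * (2:ℝ) ^ (-(n:ℤ)) ≤ u n := by
    intro n
    induction n with
    | zero => norm_num
    | succ n ih =>
      have h1 := hgt n
      have h2 : (2:ℝ) ^ (-(((n:ℕ)+1:ℕ):ℤ)) = (2:ℝ) ^ (-(n:ℤ)) / 2 := by
        push_cast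
        rw [neg_add, zpow_add₀ (by norm_num : (2:ℝ) ≠ 0)]
        norm_num
        ring
      rw [h2]
      linarith
  have hbdd' : BddBelow (Set.range u) := by
    refine ⟨u 0 - 2, ?_⟩
    rintro v ⟨n, rfl⟩
    have := hbdd n
    have h2 : (0:ℝ) < (2:ℝ) ^ (-(n:ℤ)) := by positivity
    linarith
  set L : ℝ := ⨅ n, u n with hL
  have hLle : ∀ n, L ≤ u n := fun n => ciInf_le hbdd' n
  have htend : Tendsto u atTop (nhds L) := tendsto_atTop_ciInf (fun a b hab => (hanti.antitone hab)) hbdd'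
  have hLgt : ∀ n, L < u n := fun n => lt_of_le_of_lt (hLle (n+1)) (hlt n)
  -- L ∈ S
  have hLS : σ L ∈ S := by
    by_contra hLS
    have hopen : IsOpen Sᶜ := hS.isOpen_compl
    obtain ⟨b, hb, hsub⟩ := isOpen_iff.1 hopen (σ L) hLS
    have hLb : L < ρ b := hb
    obtain ⟨n, hn⟩ := (htend.eventually_lt_const hLb).exists
    exact hsub ⟨hLle n, hn⟩ (hmem n)
  -- right isolation at σ L contradicts the sequence
  obtain ⟨b, hb, hsub⟩ := right_isolated hd hLS
  have hLb : L < ρ b := hb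
  obtain ⟨n, hn⟩ := (htend.eventually_lt_const hLb).exists
  have : σ (u n) ∈ ({σ L} : Set 𝕊) := hsub ⟨⟨hLle n, hn⟩, hmem n⟩
  have : u n = L := congrArg ρ this
  exact absurd this (ne_of_gt (hLgt n))

end Sorgenfrey10

open Sorgenfrey10 in
/-- If `f` is a continuous surjection from the Sorgenfrey line onto `X` and the fiber over
`x` is nonempty, closed and discrete, then there are rationals `a < b` and a point `y` such
that `[a, b) ∩ f ⁻¹' {x} = {y}`. -/
theorem stmt10 {X : Type} [TopologicalSpace X] (f : 𝕊 → X)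
    (hf : Continuous f) (hsurj : Surjective f) (x : X)
    (hne : (f ⁻¹' {x}).Nonempty) (hcl : IsClosed (f ⁻¹' {x}))
    (hdisc : DiscreteTopology (f ⁻¹' {x} : Set 𝕊)) :
    ∃ a b : ℚ, a < b ∧ ∃ y : 𝕊, f y = x ∧
      Set.Ico (a : 𝕊) (b : 𝕊) ∩ f ⁻¹' {x} = {y} := by
  set S : Set 𝕊 := f ⁻¹' {x} with hSdef
  obtain ⟨y, hyS, c, hc, hgap⟩ := exists_left_isolated hcl hdisc hne
  obtain ⟨b', hb', hsub⟩ := right_isolated hdisc hyS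
  obtain ⟨a, ha1, ha2⟩ := exists_rat_btwn hc
  obtain ⟨b, hb1, hb2⟩ := exists_rat_btwn (show ρ y < ρ b' from hb')
  refine ⟨a, b, ?_, y, hyS, ?_⟩
  · exact_mod_cast lt_trans ha2 hb1
  · refine Set.eq_singleton_iff_unique_mem.mpr ⟨⟨⟨le_of_lt ha2, hb1⟩, hyS⟩, ?_⟩
    rintro z ⟨⟨hz1, hz2⟩, hzS⟩
    rcases lt_or_ge (ρ z) (ρ y) with h | h
    · exact absurd ⟨lt_of_lt_of_le ha1 hz1, h⟩ (hgap z hzS)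
    · exact hsub ⟨⟨h, lt_trans hz2 hb2⟩, hzS⟩
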